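/- Let U, V be closed linear subspaces of a real Hilbert space X such that U ∩ V = {0} and U + V is closed, and let M ∈ (0,1). Then there exist ε ∈ (0, M) and η ∈ (0,1) such that for each x ∈ U(ε) \ MB_X, y ∈ V(ε) \ MB_X, and z ∈ εB_X, one has ⟨x − z, y − z⟩ ≤ η‖x − z‖‖y − z‖, where W(ε) = {w ∈ X \ {0} : ∃ u ∈ W \ {0} with cos(u,w) ≥ 1 − ε} ∪ εB_X for a subspace W. -/

import Mathlib

open Filter Metric Topology
open scoped RealInnerProductSpace

/-- For a set `W` and `ε ∈ (0,1)`, the set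
`W(ε) = {w ≠ 0 : ∃ u ∈ W \ {0}, cos(u,w) ≥ 1 − ε} ∪ εB_X`. -/
def coneNbhd {X : Type*} [NormedAddCommGroup X] [InnerProductSpace ℝ X]
    (W : Set X) (ε : ℝ) : Set X :=
  {w : X | w ≠ 0 ∧ ∃ u ∈ W, u ≠ 0 ∧ 1 - ε ≤ ⟪u, w⟫ / (‖u‖ * ‖w‖)} ∪
    Metric.closedBall 0 ε

/-- Bounded inverse for the sum map of two closed, transversal subspaces. -/
lemma stmt14aux_lemA {X : Type*} [NormedAddCommGroup X] [NormedSpace ℝ X] [CompleteSpace X]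
    (U V : Submodule ℝ X) (hUc : IsClosed (U : Set X)) (hVc : IsClosed (V : Set X))
    (hUV : U ⊓ V = ⊥) (hsum : IsClosed ((U ⊔ V : Submodule ℝ X) : Set X)) :
    ∃ C > 0, ∀ u ∈ U, ∀ v ∈ V, ‖u‖ ≤ C * ‖u + v‖ := by
  haveI := hUc.completeSpace_coe
  haveI := hVc.completeSpace_coe
  haveI := hsum.completeSpace_coe
  let g0 : (U × V) →ₗ[ℝ] X :=
    U.subtype.comp (LinearMap.fst ℝ U V) + V.subtype.comp (LinearMap.snd ℝ U V)
  have hg0 : ∀ p : U × V, g0 p ∈ (U ⊔ V : Submodule ℝ X) := fun p =>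
    Submodule.add_mem_sup p.1.2 p.2.2
  let g : (U × V) →ₗ[ℝ] (U ⊔ V : Submodule ℝ X) := g0.codRestrict _ hg0
  have hb : ∀ p : U × V, ‖g p‖ ≤ 2 * ‖p‖ := by
    intro p
    have : ‖g p‖ = ‖(p.1 : X) + (p.2 : X)‖ := rfl
    rw [this]
    calc ‖(p.1 : X) + (p.2 : X)‖ ≤ ‖(p.1 : X)‖ + ‖(p.2 : X)‖ := norm_add_le _ _
    _ ≤ ‖p‖ + ‖p‖ := add_le_add (norm_fst_le p) (norm_snd_le p)
    _ = 2 * ‖p‖ := by ring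
  let f := g.mkContinuous 2 hb
  have hsurj : Function.Surjective f := by
    rintro ⟨y, hy⟩
    obtain ⟨u, hu, v, hv, huv⟩ := Submodule.mem_sup.mp hy
    exact ⟨(⟨u, hu⟩, ⟨v, hv⟩), Subtype.ext huv⟩
  obtain ⟨C, hC, hCf⟩ := f.exists_preimage_norm_le hsurj
  refine ⟨C, hC, fun u hu v hv => ?_⟩
  obtain ⟨x, hfx, hx⟩ := hCf ⟨u + v, Submodule.add_mem_sup hu hv⟩
  have hxe : (x.1 : X) + (x.2 : X) = u + v := congrArg Subtype.val hfx
  have h1 : (x.1 : X) - u ∈ U ⊓ V := by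
    constructor
    · exact U.sub_mem x.1.2 hu
    · have : (x.1 : X) - u = v - x.2 :=
        sub_eq_sub_iff_add_eq_add.mpr (by rw [hxe, add_comm])
      rw [this]; exact V.sub_mem hv x.2.2
  have hx1 : (x.1 : X) = u := by
    rw [hUV] at h1
    exact sub_eq_zero.mp ((Submodule.mem_bot ℝ).mp h1)
  have : ‖u‖ = ‖x.1‖ := by rw [← hx1]; rfl
  rw [this]
  calc ‖x.1‖ ≤ ‖x‖ := norm_fst_le x
  _ ≤ C * ‖(⟨u + v, Submodule.add_mem_sup hu hv⟩ : (U ⊔ V : Submodule ℝ X))‖ := hx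
  _ = C * ‖u + v‖ := rfl

/-- Angle gap between closed transversal subspaces with closed sum. -/
lemma stmt14aux_lemB {X : Type*} [NormedAddCommGroup X] [InnerProductSpace ℝ X] [CompleteSpace X]
    (U V : Submodule ℝ X) (hUc : IsClosed (U : Set X)) (hVc : IsClosed (V : Set X))
    (hUV : U ⊓ V = ⊥) (hsum : IsClosed ((U ⊔ V : Submodule ℝ X) : Set X)) :
    ∃ c, 0 ≤ c ∧ c < 1 ∧ ∀ u ∈ U, ∀ v ∈ V, ⟪u, v⟫ ≤ c * (‖u‖ * ‖v‖) := by
  obtain ⟨C, hC, hCb⟩ := stmt14aux_lemA U V hUc hVc hUV hsum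
  set D := max C 1 with hD
  have hD1 : (1:ℝ) ≤ D := le_max_right _ _
  have hD0 : (0:ℝ) < D := lt_of_lt_of_le one_pos hD1
  have hDb : ∀ u ∈ U, ∀ v ∈ V, ‖u‖ ≤ D * ‖u + v‖ := fun u hu v hv =>
    (hCb u hu v hv).trans (by
      have := norm_nonneg (u + v)
      nlinarith [le_max_left C 1])
  have hfrac : (0:ℝ) < 1 / (2 * D ^ 2) := by positivity
  have hfrac2 : 1 / (2 * D ^ 2) ≤ 1 / 2 :=
    one_div_le_one_div_of_le two_pos (by nlinarith)
  refine ⟨1 - 1 / (2 * D ^ 2), by linarith, by linarith, fun u hu v hv => ?_⟩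
  rcases eq_or_ne u 0 with rfl | hu0
  · simp [inner_zero_left]
  rcases eq_or_ne v 0 with rfl | hv0
  · simp
  set a := ‖u‖ with ha
  set b := ‖v‖ with hb
  have ha0 : 0 < a := norm_pos_iff.mpr hu0
  have hb0 : 0 < b := norm_pos_iff.mpr hv0
  have hu' : b • u ∈ U := U.smul_mem _ hu
  have hv' : (-a) • v ∈ V := V.smul_mem _ hv
  have key := hDb _ hu' _ hv'
  have hnu : ‖b • u‖ = a * b := by
    rw [norm_smul]; simp [abs_of_pos hb0, mul_comm]; exact Or.inl rfl
  have hsq : ‖b • u + (-a) • v‖ ^ 2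
      = (a*b)^2 - 2 * (a*b) * ⟪u, v⟫ + (a*b)^2 := by
    rw [@norm_add_sq_real]
    rw [hnu, real_inner_smul_left, real_inner_smul_right, norm_smul]
    simp [abs_of_pos ha0]
    ring
  have key2 : (a*b)^2 ≤ D^2 * ((a*b)^2 - 2 * (a*b) * ⟪u, v⟫ + (a*b)^2) := by
    rw [← hsq]
    rw [hnu] at key
    nlinarith [norm_nonneg (b • u + (-a) • v), mul_pos ha0 hb0]
  have hP : 0 < a * b := mul_pos ha0 hb0
  have hinv : (1 / (2 * D ^ 2)) * (2 * D ^ 2) = 1 := by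
    field_simp
  nlinarith [mul_pos hP (mul_pos hD0 hD0)]

lemma stmt14aux_unitnorm {X : Type*} [NormedAddCommGroup X] [NormedSpace ℝ X] {a : X}
    (ha : a ≠ 0) : ‖‖a‖⁻¹ • a‖ = 1 := by
  have := norm_pos_iff.mpr ha
  rw [norm_smul, Real.norm_eq_abs, abs_of_pos (inv_pos.mpr this)]
  field_simp

/-- Perturbation bound for normalizations. -/
lemma stmt14aux_lemC {X : Type*} [NormedAddCommGroup X] [NormedSpace ℝ X] {a b : X}
    (ha : a ≠ 0) (hb : b ≠ 0) :
    ‖‖a‖⁻¹ • a - ‖b‖⁻¹ • b‖ ≤ 2 * ‖a - b‖ / ‖a‖ := by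
  have ha0 : 0 < ‖a‖ := norm_pos_iff.mpr ha
  have hb0 : 0 < ‖b‖ := norm_pos_iff.mpr hb
  have h1 : ‖a‖⁻¹ • a - ‖b‖⁻¹ • b = ‖a‖⁻¹ • (a - b) + (‖a‖⁻¹ - ‖b‖⁻¹) • b := by
    rw [smul_sub, sub_smul]; abel
  rw [h1]
  refine (norm_add_le _ _).trans ?_
  rw [norm_smul, norm_smul, Real.norm_eq_abs, Real.norm_eq_abs,
    abs_of_pos (inv_pos.mpr ha0)]
  have h2 : ‖a‖⁻¹ - ‖b‖⁻¹ = (‖b‖ - ‖a‖) / (‖a‖ * ‖b‖) := by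
    field_simp
  have h3 : |‖a‖⁻¹ - ‖b‖⁻¹| * ‖b‖ = |‖b‖ - ‖a‖| / ‖a‖ := by
    rw [h2, abs_div, abs_of_pos (mul_pos ha0 hb0)]
    field_simp
  rw [h3, inv_mul_eq_div, ← add_div]
  have h4 : |‖b‖ - ‖a‖| ≤ ‖a - b‖ := by
    rw [norm_sub_rev]; exact abs_norm_sub_norm_le b a
  exact div_le_div_of_nonneg_right (by linarith) ha0.le

/-- If `x` lies in the cone neighbourhood and is large, then the normalization of `x - z`
is close to a unit vector of `W`. -/
lemma stmt14aux_lemD {X : Type*} [NormedAddCommGroup X] [InnerProductSpace ℝ X]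
    (W : Submodule ℝ X) {ε M d : ℝ} (hε0 : 0 < ε) (hεM2 : ε ≤ M / 2)
    (hεd : ε ≤ d ^ 2 / 128) (hεdM : ε ≤ d * M / 32) (hd : 0 < d)
    {x z : X} (hx : x ∈ coneNbhd (W : Set X) ε) (hxM : M < ‖x‖) (hz : ‖z‖ ≤ ε) :
    x - z ≠ 0 ∧ ∃ w ∈ W, ‖w‖ = 1 ∧ ‖‖x - z‖⁻¹ • (x - z) - w‖ ≤ d / 4 := by
  rcases hx with ⟨hx0, u, huW, hu0, hcos⟩ | hball
  swap
  · rw [Metric.mem_closedBall, dist_zero_right] at hball; linarith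
  have hxn : 0 < ‖x‖ := by linarith
  have hun : 0 < ‖u‖ := norm_pos_iff.mpr hu0
  have hx'n : M / 2 < ‖x - z‖ := by
    have := norm_sub_norm_le x z
    linarith
  have hx'0 : x - z ≠ 0 := by
    intro h; rw [h, norm_zero] at hx'n; linarith
  refine ⟨hx'0, ‖u‖⁻¹ • u, W.smul_mem _ huW, stmt14aux_unitnorm hu0, ?_⟩
  have hinner : ⟪‖u‖⁻¹ • u, ‖x‖⁻¹ • x⟫ = ⟪u, x⟫ / (‖u‖ * ‖x‖) := by
    rw [real_inner_smul_left, real_inner_smul_right]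
    field_simp
  have h1 : ‖‖x‖⁻¹ • x - ‖u‖⁻¹ • u‖ ^ 2 ≤ 2 * ε := by
    rw [norm_sub_sq_real, stmt14aux_unitnorm hx0, stmt14aux_unitnorm hu0,
      real_inner_comm, hinner]
    nlinarith
  have h1' : ‖‖x‖⁻¹ • x - ‖u‖⁻¹ • u‖ ≤ d / 8 := by
    nlinarith [norm_nonneg (‖x‖⁻¹ • x - ‖u‖⁻¹ • u)]
  have h2 : ‖‖x - z‖⁻¹ • (x - z) - ‖x‖⁻¹ • x‖ ≤ d / 8 := by
    have hc := stmt14aux_lemC hx'0 hx0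
    have he : (x - z) - x = -z := by abel
    rw [he, norm_neg] at hc
    have : 2 * ‖z‖ / ‖x - z‖ ≤ d / 8 := by
      rw [div_le_iff₀ (by linarith)]
      nlinarith
    linarith
  calc ‖‖x - z‖⁻¹ • (x - z) - ‖u‖⁻¹ • u‖
      ≤ ‖‖x - z‖⁻¹ • (x - z) - ‖x‖⁻¹ • x‖ + ‖‖x‖⁻¹ • x - ‖u‖⁻¹ • u‖ :=
        norm_sub_le_norm_sub_add_norm_sub _ _ _
    _ ≤ d / 8 + d / 8 := add_le_add h2 h1'
    _ = d / 4 := by ring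

theorem stmt14 {X : Type*} [NormedAddCommGroup X] [InnerProductSpace ℝ X] [CompleteSpace X]
    (U V : Submodule ℝ X) (hUc : IsClosed (U : Set X)) (hVc : IsClosed (V : Set X))
    (hUV : U ⊓ V = ⊥) (hsum : IsClosed ((U ⊔ V : Submodule ℝ X) : Set X))
    (M : ℝ) (hM : M ∈ Set.Ioo (0 : ℝ) 1) :
    ∃ ε ∈ Set.Ioo (0 : ℝ) M, ∃ η ∈ Set.Ioo (0 : ℝ) 1,
      ∀ x ∈ coneNbhd (U : Set X) ε, M < ‖x‖ →
        ∀ y ∈ coneNbhd (V : Set X) ε, M < ‖y‖ →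
          ∀ z ∈ Metric.closedBall (0 : X) ε,
            ⟪x - z, y - z⟫ ≤ η * (‖x - z‖ * ‖y - z‖) := by
  obtain ⟨hM0, hM1⟩ := hM
  obtain ⟨c, hc0, hc1, hcb⟩ := stmt14aux_lemB U V hUc hVc hUV hsum
  set d := (1 - c) / 2 with hdd
  have hd : 0 < d := by simp only [hdd]; linarith
  set ε := min (M / 2) (min (d ^ 2 / 128) (d * M / 32)) with hε
  have hε0 : 0 < ε := by
    apply lt_min (by linarith)
    exact lt_min (by positivity) (by positivity)
  have hεM2 : ε ≤ M / 2 := min_le_left _ _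
  have hεd : ε ≤ d ^ 2 / 128 := le_trans (min_le_right _ _) (min_le_left _ _)
  have hεdM : ε ≤ d * M / 32 := le_trans (min_le_right _ _) (min_le_right _ _)
  refine ⟨ε, ⟨hε0, by linarith⟩, (1 + c) / 2, ⟨by linarith, by linarith⟩, ?_⟩
  intro x hx hxM y hy hyM z hz
  rw [Metric.mem_closedBall, dist_zero_right] at hz
  obtain ⟨hx0, u, huU, hu1, hud⟩ := stmt14aux_lemD U hε0 hεM2 hεd hεdM hd hx hxM hz
  obtain ⟨hy0, v, hvV, hv1, hvd⟩ := stmt14aux_lemD V hε0 hεM2 hεd hεdM hd hy hyM hz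
  set a := ‖x - z‖⁻¹ • (x - z) with haa
  set b := ‖y - z‖⁻¹ • (y - z) with hbb
  have han : ‖a‖ = 1 := stmt14aux_unitnorm hx0
  have hbn : ‖b‖ = 1 := stmt14aux_unitnorm hy0
  have key : ⟪a, b⟫ ≤ (1 + c) / 2 := by
    have e1 : ⟪a, b⟫ = ⟪u, v⟫ + (⟪a - u, b⟫ + ⟪u, b - v⟫) := by
      rw [inner_sub_left, inner_sub_right]; ring
    have e2 : ⟪a - u, b⟫ ≤ d / 4 := by
      calc ⟪a - u, b⟫ ≤ ‖a - u‖ * ‖b‖ := real_inner_le_norm _ _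
      _ = ‖a - u‖ := by rw [hbn, mul_one]
      _ ≤ d / 4 := hud
    have e3 : ⟪u, b - v⟫ ≤ d / 4 := by
      calc ⟪u, b - v⟫ ≤ ‖u‖ * ‖b - v‖ := real_inner_le_norm _ _
      _ = ‖b - v‖ := by rw [hu1, one_mul]
      _ ≤ d / 4 := hvd
    have e4 : ⟪u, v⟫ ≤ c := by
      have := hcb u huU v hvV
      rw [hu1, hv1] at this
      simpa using this
    rw [e1]
    simp only [hdd] at *
    linarith
  have hxz : x - z = ‖x - z‖ • a := (smul_inv_smul₀ (norm_ne_zero_iff.mpr hx0) _).symm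
  have hyz : y - z = ‖y - z‖ • b := (smul_inv_smul₀ (norm_ne_zero_iff.mpr hy0) _).symm
  calc ⟪x - z, y - z⟫ = ‖x - z‖ * (‖y - z‖ * ⟪a, b⟫) := by
        conv_lhs => rw [hxz, hyz]
        rw [real_inner_smul_left, real_inner_smul_right]
    _ ≤ ‖x - z‖ * (‖y - z‖ * ((1 + c) / 2)) := by
        apply mul_le_mul_of_nonneg_left _ (norm_nonneg _)
        exact mul_le_mul_of_nonneg_left key (norm_nonneg _)
    _ = (1 + c) / 2 * (‖x - z‖ * ‖y - z‖) := by ring
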